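/- Let (X_k)_{k ≥ 0} be i.i.d. real random variables with E[log⁺|X_0|] < ∞, and for n ≥ 1 define Y_n = 2^{-n/2+1} ∑_{k=0}^{n-1} 2^{k/2} X_k. Then the family (Y_n)_{n ≥ 1} is tight: for every ε > 0 there exists M > 0 with P(|Y_n| ≥ M) ≤ ε for all n. -/

import Mathlib

open MeasureTheory ProbabilityTheory

private lemma aux_pow_half (j : ℕ) : (2:ℝ) ^ ((j:ℝ)/2) = Real.sqrt 2 ^ j := by
  rw [Real.sqrt_eq_rpow, ← Real.rpow_natCast ((2:ℝ) ^ ((1:ℝ)/2)) j,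
    ← Real.rpow_mul (by norm_num : (0:ℝ) ≤ 2)]
  ring_nf

private lemma aux_term (a : ℝ) (j : ℕ) :
    (2:ℝ) ^ (1 - (j:ℝ)/2) * a ^ j = 2 * (a / Real.sqrt 2) ^ j := by
  have hs : (0:ℝ) < Real.sqrt 2 := Real.sqrt_pos.2 (by norm_num)
  rw [Real.rpow_sub (by norm_num : (0:ℝ) < 2), Real.rpow_one, div_pow, aux_pow_half]
  ring

/-- Telescoping layer-cake bound: `∑_{j<n} μ{Z ≥ s + (j+1)c} ≤ E[(Z-s)⁺]/c`. -/
private lemma aux_tail {Ω : Type*} [MeasurableSpace Ω] (μ : Measure Ω) [IsProbabilityMeasure μ]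
    (Z : Ω → ℝ) (hZm : Measurable Z) (hZi : Integrable Z μ)
    (c : ℝ) (hc : 0 < c) (s : ℝ) (n : ℕ) :
    ∑ j ∈ Finset.range n, (μ {ω | s + ((j:ℝ)+1) * c ≤ Z ω}).toReal ≤
      (∫ ω, max (Z ω - s) 0 ∂μ) / c := by
  set W : Ω → ℝ := fun ω => max (Z ω - s) 0 with hWdef
  have hW0 : ∀ ω, 0 ≤ W ω := fun ω => le_max_right _ _
  have hWm : Measurable W := (hZm.sub measurable_const).max measurable_const
  have hWi : Integrable W μ := (hZi.sub (integrable_const s)).pos_part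
  set g : ℕ → Ω → ℝ := fun j ω => min (W ω) ((j:ℝ) * c) / c with hgdef
  have hgm : ∀ j, Measurable (g j) := fun j => (hWm.min measurable_const).div_const c
  have hgi : ∀ j, Integrable (g j) μ := by
    intro j
    refine (integrable_const ((j:ℝ))).mono' (hgm j).aestronglyMeasurable (ae_of_all _ ?_)
    intro ω
    have h1 : 0 ≤ min (W ω) ((j:ℝ)*c) := le_min (hW0 ω) (by positivity)
    have h2 : min (W ω) ((j:ℝ)*c) ≤ (j:ℝ)*c := min_le_right _ _
    rw [Real.norm_eq_abs, abs_of_nonneg (by positivity), div_le_iff₀ hc]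
    linarith
  have hmono : ∀ j : ℕ, (μ {ω | s + ((j:ℝ)+1) * c ≤ Z ω}).toReal ≤
      (∫ ω, g (j+1) ω ∂μ) - ∫ ω, g j ω ∂μ := by
    intro j
    have hA : MeasurableSet {ω | s + ((j:ℝ)+1) * c ≤ Z ω} :=
      measurableSet_le measurable_const hZm
    have h1 : (μ {ω | s + ((j:ℝ)+1) * c ≤ Z ω}).toReal =
        ∫ ω, Set.indicator {ω | s + ((j:ℝ)+1) * c ≤ Z ω} (fun _ => (1:ℝ)) ω ∂μ := by
      rw [integral_indicator_const (1:ℝ) hA]; simp [Measure.real]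
    rw [h1, ← integral_sub (hgi (j+1)) (hgi j)]
    refine integral_mono ((integrable_const (1:ℝ)).indicator hA) ((hgi (j+1)).sub (hgi j)) ?_
    intro ω
    have hcast : ((j+1:ℕ):ℝ) = (j:ℝ) + 1 := by push_cast; ring
    simp only [hgdef, hcast, div_sub_div_same]
    by_cases hω : ω ∈ {ω | s + ((j:ℝ)+1) * c ≤ Z ω}
    · have hWω : ((j:ℝ)+1) * c ≤ W ω := by
        have h := hω
        simp only [Set.mem_setOf_eq] at h
        exact le_trans (by linarith) (le_max_left (Z ω - s) 0)
      rw [Set.indicator_of_mem hω, min_eq_right hWω,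
        min_eq_right (le_trans (by nlinarith) hWω)]
      rw [le_div_iff₀ hc]; nlinarith
    · rw [Set.indicator_of_notMem hω]
      have hmm : min (W ω) ((j:ℝ) * c) ≤ min (W ω) (((j:ℝ)+1) * c) :=
        min_le_min le_rfl (by nlinarith)
      exact div_nonneg (by linarith) hc.le
  have hsum : ∑ j ∈ Finset.range n, (μ {ω | s + ((j:ℝ)+1) * c ≤ Z ω}).toReal ≤
      ∑ j ∈ Finset.range n, ((∫ ω, g (j+1) ω ∂μ) - ∫ ω, g j ω ∂μ) :=
    Finset.sum_le_sum fun j _ => hmono j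
  rw [Finset.sum_range_sub (fun j => ∫ ω, g j ω ∂μ) n] at hsum
  have hg0 : (∫ ω, g 0 ω ∂μ) = 0 := by
    have : g 0 = fun _ => 0 := by
      funext ω
      simp only [hgdef, Nat.cast_zero, zero_mul, min_eq_right (hW0 ω), zero_div]
    rw [this, integral_zero]
  rw [hg0, sub_zero] at hsum
  refine hsum.trans ?_
  rw [div_eq_mul_inv, ← integral_mul_const]
  refine integral_mono (hgi n) (hWi.mul_const _) fun ω => ?_
  simp only [hgdef, div_eq_mul_inv]
  exact mul_le_mul_of_nonneg_right (min_le_left _ _) (by positivity)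

theorem stmt_13 {Ω : Type*} [MeasurableSpace Ω] (μ : Measure Ω) [IsProbabilityMeasure μ]
    (X : ℕ → Ω → ℝ) (hmeas : ∀ k, Measurable (X k))
    (hindep : iIndepFun X μ)
    (hident : ∀ k, Measure.map (X k) μ = Measure.map (X 0) μ)
    (hlog : Integrable (fun ω => max (Real.log |X 0 ω|) 0) μ) :
    ∀ ε : ℝ, 0 < ε → ∃ M : ℝ, 0 < M ∧ ∀ n : ℕ, 1 ≤ n →
      (μ {ω | M ≤ |(2:ℝ) ^ (-(n:ℝ) / 2 + 1) *
          ∑ k ∈ Finset.range n, (2:ℝ) ^ ((k:ℝ) / 2) * X k ω|}).toReal ≤ ε := by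
  intro ε hε
  set Z : Ω → ℝ := fun ω => max (Real.log |X 0 ω|) 0 with hZdef
  have hZm : Measurable Z := ((Real.measurable_log.comp (hmeas 0).abs)).max measurable_const
  have hZi : Integrable Z μ := hlog
  have hZ0 : ∀ ω, 0 ≤ Z ω := fun ω => le_max_right _ _
  -- constants
  have hs2 : (1:ℝ) < Real.sqrt 2 := by
    rw [show (1:ℝ) = Real.sqrt 1 by simp]
    exact Real.sqrt_lt_sqrt (by norm_num) (by norm_num)
  set θ : ℝ := (6/5) / Real.sqrt 2 with hθdef
  have hθ0 : (0:ℝ) < θ := by positivity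
  have hθ1 : θ < 1 := by
    rw [hθdef, div_lt_one (by positivity)]
    rw [show (6/5:ℝ) = Real.sqrt ((6/5)^2) by rw [Real.sqrt_sq (by norm_num)]]
    exact Real.sqrt_lt_sqrt (by positivity) (by norm_num)
  have h1θ : (0:ℝ) < 1 - θ := by linarith
  set c : ℝ := Real.log (6/5) with hcdef
  have hc : (0:ℝ) < c := Real.log_pos (by norm_num)
  -- step 1 : choose m with small tail integral
  have htend : Filter.Tendsto (fun m : ℕ => ∫ ω, max (Z ω - m) 0 ∂μ)
      Filter.atTop (nhds (∫ _ω, (0:ℝ) ∂μ)) := by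
    refine tendsto_integral_of_dominated_convergence Z
      (fun m => ((hZm.sub measurable_const).max measurable_const).aestronglyMeasurable)
      hZi (fun m => ae_of_all _ fun ω => ?_) (ae_of_all _ fun ω => ?_)
    · rw [Real.norm_eq_abs, abs_of_nonneg (le_max_right _ _)]
      exact max_le (by have : (0:ℝ) ≤ m := Nat.cast_nonneg m; linarith) (hZ0 ω)
    · have hev : ∀ᶠ m : ℕ in Filter.atTop, max (Z ω - m) 0 = 0 := by
        filter_upwards [Filter.eventually_ge_atTop (Nat.ceil (Z ω))] with m hm
        have : Z ω ≤ (m:ℝ) := le_trans (Nat.le_ceil _) (by exact_mod_cast hm)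
        exact max_eq_right (by linarith)
      exact Filter.Tendsto.congr' (hev.mono fun m h => h.symm) tendsto_const_nhds
  have htend0 : Filter.Tendsto (fun m : ℕ => ∫ ω, max (Z ω - m) 0 ∂μ)
      Filter.atTop (nhds 0) := by simpa using htend
  obtain ⟨m, hm⟩ : ∃ m : ℕ, ∫ ω, max (Z ω - m) 0 ∂μ < ε * c :=
    (htend0.eventually (gt_mem_nhds (mul_pos hε hc))).exists
  -- the constant M
  set M : ℝ := 2 * Real.exp m * θ / (1 - θ) with hMdef
  have hM : 0 < M := div_pos (by positivity) h1θ
  refine ⟨M, hM, fun n hn => ?_⟩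
  set t : ℕ → ℝ := fun j => Real.exp m * (6/5:ℝ)^j with htdef
  -- positivity facts
  have hP : ∀ k : ℕ, (0:ℝ) < (2:ℝ)^((k:ℝ)/2) := fun k => Real.rpow_pos_of_pos two_pos _
  have hE : (0:ℝ) < (2:ℝ) ^ (-(n:ℝ)/2 + 1) := Real.rpow_pos_of_pos two_pos _
  -- per-term algebraic identity
  have hterm : ∀ k ∈ Finset.range n,
      (2:ℝ)^(-(n:ℝ)/2+1) * ((2:ℝ)^((k:ℝ)/2) * t (n-k)) = 2 * Real.exp m * θ^(n-k) := by
    intro k hk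
    have hkn : k ≤ n := le_of_lt (Finset.mem_range.1 hk)
    have hcast : ((n - k : ℕ):ℝ) = (n:ℝ) - (k:ℝ) := by
      rw [Nat.cast_sub hkn]
    have h2 : (2:ℝ)^(-(n:ℝ)/2+1) * (2:ℝ)^((k:ℝ)/2) = (2:ℝ)^(1 - ((n-k:ℕ):ℝ)/2) := by
      rw [← Real.rpow_add two_pos, hcast]; ring_nf
    calc (2:ℝ)^(-(n:ℝ)/2+1) * ((2:ℝ)^((k:ℝ)/2) * t (n-k))
        = ((2:ℝ)^(-(n:ℝ)/2+1) * (2:ℝ)^((k:ℝ)/2)) * (Real.exp m * (6/5:ℝ)^(n-k)) := by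
          rw [htdef]; ring
      _ = Real.exp m * ((2:ℝ)^(1 - ((n-k:ℕ):ℝ)/2) * (6/5:ℝ)^(n-k)) := by rw [h2]; ring
      _ = Real.exp m * (2 * θ^(n-k)) := by rw [aux_term (6/5) (n-k), hθdef]
      _ = 2 * Real.exp m * θ^(n-k) := by ring
  -- geometric sum bound
  have hgeo : ∑ k ∈ Finset.range n, θ^(n-k) ≤ θ / (1-θ) := by
    have hre := Finset.sum_range_reflect (fun j => θ^(j+1)) n
    have heq : ∑ k ∈ Finset.range n, θ^(n-k) = ∑ j ∈ Finset.range n, θ^(j+1) := by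
      rw [← hre]
      refine Finset.sum_congr rfl fun k hk => ?_
      have := Finset.mem_range.1 hk
      congr 1
      omega
    rw [heq]
    calc ∑ j ∈ Finset.range n, θ^(j+1) = θ * ∑ j ∈ Finset.range n, θ^j := by
          rw [Finset.mul_sum]
          exact Finset.sum_congr rfl fun j _ => by ring
      _ ≤ θ * ((1:ℝ)/(1-θ)) := by
          refine mul_le_mul_of_nonneg_left ?_ hθ0.le
          have h := geom_sum_Ico_le_of_lt_one hθ0.le hθ1 (m := 0) (n := n)
          rw [pow_zero] at h
          rw [Finset.range_eq_Ico]
          exact h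
      _ = θ/(1-θ) := by ring
  -- the bound on the weighted sum of thresholds
  have hb3 : (2:ℝ)^(-(n:ℝ)/2+1) * ∑ k ∈ Finset.range n, (2:ℝ)^((k:ℝ)/2) * t (n-k) ≤ M := by
    rw [Finset.mul_sum]
    rw [Finset.sum_congr rfl hterm]
    rw [← Finset.mul_sum]
    calc 2 * Real.exp m * ∑ k ∈ Finset.range n, θ^(n-k)
        ≤ 2 * Real.exp m * (θ/(1-θ)) := mul_le_mul_of_nonneg_left hgeo (by positivity)
      _ = M := by rw [hMdef]; ring
  -- inclusion of events
  have hincl : {ω | M ≤ |(2:ℝ) ^ (-(n:ℝ) / 2 + 1) *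
        ∑ k ∈ Finset.range n, (2:ℝ) ^ ((k:ℝ) / 2) * X k ω|}
      ⊆ ⋃ k ∈ Finset.range n, {ω | t (n-k) ≤ |X k ω|} := by
    intro ω hω
    simp only [Set.mem_setOf_eq] at hω
    by_contra hcon
    rw [Set.mem_iUnion₂] at hcon
    push_neg at hcon
    simp only [Set.mem_setOf_eq, not_le] at hcon
    have hb1 : |∑ k ∈ Finset.range n, (2:ℝ)^((k:ℝ)/2) * X k ω|
        ≤ ∑ k ∈ Finset.range n, (2:ℝ)^((k:ℝ)/2) * |X k ω| := by
      refine (Finset.abs_sum_le_sum_abs _ _).trans (le_of_eq ?_)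
      refine Finset.sum_congr rfl fun k _ => ?_
      rw [abs_mul, abs_of_pos (hP k)]
    have hb2 : ∑ k ∈ Finset.range n, (2:ℝ)^((k:ℝ)/2) * |X k ω|
        < ∑ k ∈ Finset.range n, (2:ℝ)^((k:ℝ)/2) * t (n-k) := by
      refine Finset.sum_lt_sum_of_nonempty (Finset.nonempty_range_iff.2 (by omega))
        fun k hk => mul_lt_mul_of_pos_left (hcon k hk) (hP k)
    have h4 : M < M := by
      calc M ≤ |(2:ℝ) ^ (-(n:ℝ)/2 + 1) *
            ∑ k ∈ Finset.range n, (2:ℝ)^((k:ℝ)/2) * X k ω| := hω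
        _ = (2:ℝ)^(-(n:ℝ)/2+1) * |∑ k ∈ Finset.range n, (2:ℝ)^((k:ℝ)/2) * X k ω| := by
            rw [abs_mul, abs_of_pos hE]
        _ ≤ (2:ℝ)^(-(n:ℝ)/2+1) * ∑ k ∈ Finset.range n, (2:ℝ)^((k:ℝ)/2) * |X k ω| :=
            mul_le_mul_of_nonneg_left hb1 hE.le
        _ < (2:ℝ)^(-(n:ℝ)/2+1) * ∑ k ∈ Finset.range n, (2:ℝ)^((k:ℝ)/2) * t (n-k) :=
            mul_lt_mul_of_pos_left hb2 hE
        _ ≤ M := hb3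
    exact lt_irrefl M h4
  -- measure of the union bound
  have hmeasb : (μ {ω | M ≤ |(2:ℝ) ^ (-(n:ℝ) / 2 + 1) *
        ∑ k ∈ Finset.range n, (2:ℝ) ^ ((k:ℝ) / 2) * X k ω|}).toReal
      ≤ ∑ k ∈ Finset.range n, (μ {ω | t (n-k) ≤ |X k ω|}).toReal := by
    have h1 : μ {ω | M ≤ |(2:ℝ) ^ (-(n:ℝ) / 2 + 1) *
          ∑ k ∈ Finset.range n, (2:ℝ) ^ ((k:ℝ) / 2) * X k ω|}
        ≤ ∑ k ∈ Finset.range n, μ {ω | t (n-k) ≤ |X k ω|} :=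
      (measure_mono hincl).trans (measure_biUnion_finset_le _ _)
    have h2 := ENNReal.toReal_mono
      (ENNReal.sum_ne_top.2 fun k _ => measure_ne_top μ _) h1
    refine h2.trans_eq (ENNReal.toReal_sum fun k _ => measure_ne_top μ _)
  -- identical distribution
  have hid : ∀ k, ∀ r : ℝ, μ {ω | r ≤ |X k ω|} = μ {ω | r ≤ |X 0 ω|} := by
    intro k r
    have hB : MeasurableSet {x : ℝ | r ≤ |x|} := measurableSet_le measurable_const measurable_abs
    have h1 : {ω | r ≤ |X k ω|} = X k ⁻¹' {x | r ≤ |x|} := rfl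
    have h2 : {ω | r ≤ |X 0 ω|} = X 0 ⁻¹' {x | r ≤ |x|} := rfl
    rw [h1, h2, ← Measure.map_apply (hmeas k) hB, ← Measure.map_apply (hmeas 0) hB, hident k]
  -- threshold vs log event
  have htj : ∀ j : ℕ, t j = Real.exp ((m:ℝ) + (j:ℝ) * c) := by
    intro j
    show Real.exp (m:ℝ) * (6/5:ℝ)^j = _
    rw [show ((6:ℝ)/5) = Real.exp c by rw [hcdef, Real.exp_log (by norm_num)],
      ← Real.exp_nat_mul, ← Real.exp_add]
  have hsub : ∀ j : ℕ, μ {ω | t j ≤ |X 0 ω|} ≤ μ {ω | (m:ℝ) + (j:ℝ) * c ≤ Z ω} := by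
    intro j
    refine measure_mono fun ω hω => ?_
    simp only [Set.mem_setOf_eq] at hω ⊢
    rw [htj j] at hω
    have hpos : (0:ℝ) < |X 0 ω| := lt_of_lt_of_le (Real.exp_pos _) hω
    have h2 : (m:ℝ) + (j:ℝ)*c ≤ Real.log |X 0 ω| := (Real.le_log_iff_exp_le hpos).2 hω
    exact le_trans h2 (le_max_left _ _)
  -- put it together
  set q : ℕ → ℝ := fun j => (μ {ω | (m:ℝ) + (j:ℝ)*c ≤ Z ω}).toReal with hqdef
  have hre2 : ∑ k ∈ Finset.range n, q (n-k) = ∑ j ∈ Finset.range n, q (j+1) := by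
    rw [← Finset.sum_range_reflect (fun j => q (j+1)) n]
    refine Finset.sum_congr rfl fun k hk => ?_
    have := Finset.mem_range.1 hk
    congr 1
    omega
  calc (μ {ω | M ≤ |(2:ℝ) ^ (-(n:ℝ) / 2 + 1) *
        ∑ k ∈ Finset.range n, (2:ℝ) ^ ((k:ℝ) / 2) * X k ω|}).toReal
      ≤ ∑ k ∈ Finset.range n, (μ {ω | t (n-k) ≤ |X k ω|}).toReal := hmeasb
    _ = ∑ k ∈ Finset.range n, (μ {ω | t (n-k) ≤ |X 0 ω|}).toReal :=
        Finset.sum_congr rfl fun k _ => by rw [hid k]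
    _ ≤ ∑ k ∈ Finset.range n, q (n-k) :=
        Finset.sum_le_sum fun k _ =>
          ENNReal.toReal_mono (measure_ne_top _ _) (hsub (n-k))
    _ = ∑ j ∈ Finset.range n, q (j+1) := hre2
    _ = ∑ j ∈ Finset.range n, (μ {ω | (m:ℝ) + ((j:ℝ)+1) * c ≤ Z ω}).toReal := by
        refine Finset.sum_congr rfl fun j _ => ?_
        rw [hqdef]
        norm_num [Nat.cast_succ]
    _ ≤ (∫ ω, max (Z ω - m) 0 ∂μ) / c := aux_tail μ Z hZm hZi c hc m n
    _ ≤ ε := by rw [div_le_iff₀ hc]; linarith
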